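/- If π is a simple permutation of {1,…,n}, then the automorphism group of the inversion graph G_π is isomorphic to a subgroup of ℤ/2ℤ × ℤ/2ℤ; in particular, G_π has at most 4 automorphisms and every automorphism of G_π is an involution. -/

import Mathlib

/-- The inversion graph of a permutation. -/
def invGraph {n : ℕ} (π : Equiv.Perm (Fin n)) : SimpleGraph (Fin n) :=
  SimpleGraph.fromRel fun i j => i < j ∧ π j < π i

/-- An interval of a permutation. -/
def IsPermInterval {n : ℕ} (π : Equiv.Perm (Fin n)) (I : Set (Fin n)) : Prop :=
  (∀ ⦃a b c : Fin n⦄, a ∈ I → c ∈ I → a ≤ b → b ≤ c → b ∈ I) ∧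
  (∀ ⦃a b c : Fin n⦄, a ∈ (⇑π) '' I → c ∈ (⇑π) '' I → a ≤ b → b ≤ c → b ∈ (⇑π) '' I)

/-- A permutation is simple if all of its intervals are trivial. -/
def IsSimplePerm {n : ℕ} (π : Equiv.Perm (Fin n)) : Prop :=
  ∀ I : Set (Fin n), IsPermInterval π I → I.ncard ≤ 1 ∨ I = Set.univ

namespace AutKlein

set_option linter.unusedVariables false

variable {n : ℕ}

/-- Non-edge relation (dominance order). -/
def Lt2 (π : Equiv.Perm (Fin n)) (i j : Fin n) : Prop := i < j ∧ π i < π j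

/-- Edge relation, oriented by position. -/
def Lt3 (π : Equiv.Perm (Fin n)) (i j : Fin n) : Prop := i < j ∧ π j < π i

lemma adj_iff (π : Equiv.Perm (Fin n)) (i j : Fin n) :
    (invGraph π).Adj i j ↔ Lt3 π i j ∨ Lt3 π j i := by
  rw [invGraph, SimpleGraph.fromRel_adj]
  constructor
  · rintro ⟨-, h⟩; exact h
  · rintro (h | h)
    · exact ⟨ne_of_lt h.1, Or.inl h⟩
    · exact ⟨(ne_of_lt h.1).symm, Or.inr h⟩

lemma val_lt_or (π : Equiv.Perm (Fin n)) {i j : Fin n} (hne : i ≠ j) :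
    π i < π j ∨ π j < π i :=
  lt_or_gt_of_ne (fun h => hne (π.injective h))

lemma lt2_or (π : Equiv.Perm (Fin n)) {i j : Fin n} (hne : i ≠ j)
    (hna : ¬ (invGraph π).Adj i j) : Lt2 π i j ∨ Lt2 π j i := by
  rw [adj_iff] at hna
  push_neg at hna
  rcases lt_or_gt_of_ne hne with h | h
  · rcases val_lt_or π hne with hv | hv
    · exact Or.inl ⟨h, hv⟩
    · exact absurd ⟨h, hv⟩ hna.1
  · rcases val_lt_or π hne with hv | hv
    · exact absurd ⟨h, hv⟩ hna.2
    · exact Or.inr ⟨h, hv⟩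

lemma lt2_not_adj {π : Equiv.Perm (Fin n)} {i j : Fin n} (h : Lt2 π i j) :
    ¬ (invGraph π).Adj i j := by
  rw [adj_iff]
  rintro (⟨h1, h2⟩ | ⟨h1, h2⟩)
  · exact absurd h.2 (not_lt.mpr h2.le)
  · exact absurd h.1 (not_lt.mpr h1.le)

lemma lt3_adj {π : Equiv.Perm (Fin n)} {i j : Fin n} (h : Lt3 π i j) :
    (invGraph π).Adj i j := (adj_iff π i j).mpr (Or.inl h)

lemma lt2_trans {π : Equiv.Perm (Fin n)} {i j k : Fin n}
    (h1 : Lt2 π i j) (h2 : Lt2 π j k) : Lt2 π i k :=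
  ⟨h1.1.trans h2.1, h1.2.trans h2.2⟩

lemma lt3_trans {π : Equiv.Perm (Fin n)} {i j k : Fin n}
    (h1 : Lt3 π i j) (h2 : Lt3 π j k) : Lt3 π i k :=
  ⟨h1.1.trans h2.1, h2.2.trans h1.2⟩

lemma lt2_ne {π : Equiv.Perm (Fin n)} {i j : Fin n} (h : Lt2 π i j) : i ≠ j :=
  ne_of_lt h.1

/-- Modules of the inversion graph. -/
def IsMod (π : Equiv.Perm (Fin n)) (S : Set (Fin n)) : Prop :=
  ∀ v ∉ S, ∀ a ∈ S, ∀ b ∈ S, ((invGraph π).Adj v a ↔ (invGraph π).Adj v b)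


/-- A two-element module `{a,b}` with a "mixed" non-adjacent external point `v`
(`a ≺ v ≺ b`) contradicts simplicity. -/
lemma pair2 (π : Equiv.Perm (Fin n)) (hπ : IsSimplePerm π) {S : Set (Fin n)}
    (hmod : IsMod π S) {a b v : Fin n} (ha : a ∈ S) (hb : b ∈ S) (hv : v ∉ S)
    (honly : ∀ x ∈ S, x = a ∨ x = b) (hav : Lt2 π a v) (hvb : Lt2 π v b) : False := by
  have hab : a < b := hav.1.trans hvb.1
  have hvab : π a < π b := hav.2.trans hvb.2
  have hmid : ∀ u : Fin n, a < u → u < b → π a < π u ∧ π u < π b := by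
    intro u h1 h2
    have huS : u ∉ S := by
      intro huS
      rcases honly u huS with rfl | rfl
      · exact lt_irrefl _ h1
      · exact lt_irrefl _ h2
    have hiff := hmod u huS a ha b hb
    by_cases hadj : (invGraph π).Adj u a
    · have hadjb := hiff.mp hadj
      rw [adj_iff] at hadj hadjb
      rcases hadj with h | h
      · exact absurd h.1 (asymm h1)
      · rcases hadjb with h' | h'
        · exact absurd hvab (not_lt.mpr ((h'.2.trans h.2).le))
        · exact absurd h'.1 (asymm h2)
    · have hnadjb : ¬ (invGraph π).Adj u b := fun hh => hadj (hiff.mpr hh)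
      rcases lt2_or π (ne_of_gt h1) hadj with h | h
      · exact absurd h.1 (asymm h1)
      · rcases lt2_or π (ne_of_lt h2) hnadjb with h' | h'
        · exact ⟨h.2, h'.2⟩
        · exact absurd h'.1 (asymm h2)
  have himg : (⇑π) '' {u : Fin n | a ≤ u ∧ u < b} = {w | π a ≤ w ∧ w < π b} := by
    ext w
    constructor
    · rintro ⟨u, ⟨h1, h2⟩, rfl⟩
      rcases eq_or_lt_of_le h1 with rfl | h1'
      · exact ⟨le_refl _, hvab⟩
      · exact ⟨(hmid u h1' h2).1.le, (hmid u h1' h2).2⟩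
    · rintro ⟨h1, h2⟩
      refine ⟨π.symm w, ?_, π.apply_symm_apply w⟩
      have hpu : π (π.symm w) = w := π.apply_symm_apply w
      rw [← hpu] at h1 h2
      generalize π.symm w = u at *
      rcases eq_or_lt_of_le h1 with he | h1'
      · have : u = a := π.injective he.symm
        rw [this]; exact ⟨le_refl _, hab⟩
      · have hune_a : u ≠ a := fun h => absurd h1' (h ▸ lt_irrefl _)
        have hune_b : u ≠ b := fun h => absurd h2 (h ▸ lt_irrefl _)
        have huS : u ∉ S := by
          intro huS; rcases honly u huS with h | h
          · exact hune_a h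
          · exact hune_b h
        have hiff := hmod u huS a ha b hb
        rcases lt_trichotomy u a with hua | hua | hua
        · exfalso
          by_cases hadj : (invGraph π).Adj u a
          · have hadjb := hiff.mp hadj
            rw [adj_iff] at hadjb
            rcases hadjb with h' | h'
            · exact absurd h'.2 (asymm h2)
            · exact absurd h'.1 (asymm (hua.trans hab))
          · rcases lt2_or π (ne_of_lt hua) hadj with h | h
            · exact absurd h.2 (asymm h1')
            · exact absurd h.1 (asymm hua)
        · exact absurd hua hune_a
        · have hub : u < b := by
            rcases lt_trichotomy u b with h | h | h
            · exact h
            · exact absurd h hune_b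
            · exfalso
              by_cases hadj : (invGraph π).Adj u b
              · have hadja := hiff.mpr hadj
                rw [adj_iff] at hadja
                rcases hadja with h' | h'
                · exact absurd h'.1 (asymm hua)
                · exact absurd h'.2 (asymm h1')
              · rcases lt2_or π (ne_of_gt h) hadj with h' | h'
                · exact absurd h'.1 (asymm h)
                · exact absurd h'.2 (asymm h2)
          exact ⟨hua.le, hub⟩
  have hint : IsPermInterval π {u : Fin n | a ≤ u ∧ u < b} := by
    constructor
    · intro x y z hx hz hxy hyz
      exact ⟨hx.1.trans hxy, lt_of_le_of_lt hyz hz.2⟩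
    · intro x y z hx hz hxy hyz
      rw [himg] at hx hz ⊢
      exact ⟨hx.1.trans hxy, lt_of_le_of_lt hyz hz.2⟩
  rcases hπ _ hint with h | h
  · have : 1 < Set.ncard {u : Fin n | a ≤ u ∧ u < b} := by
      rw [Set.one_lt_ncard (Set.toFinite _)]
      exact ⟨a, ⟨le_refl a, hab⟩, v, ⟨hav.1.le, hvb.1⟩, lt2_ne hav⟩
    omega
  · have : b ∈ {u : Fin n | a ≤ u ∧ u < b} := h ▸ Set.mem_univ b
    exact lt_irrefl b this.2

/-- Same with a mixed adjacent external point (`a ◁ v ◁ b`). -/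
lemma pair3 (π : Equiv.Perm (Fin n)) (hπ : IsSimplePerm π) {S : Set (Fin n)}
    (hmod : IsMod π S) {a b v : Fin n} (ha : a ∈ S) (hb : b ∈ S) (hv : v ∉ S)
    (honly : ∀ x ∈ S, x = a ∨ x = b) (hav : Lt3 π a v) (hvb : Lt3 π v b) : False := by
  have hab : a < b := hav.1.trans hvb.1
  have hvab : π b < π a := hvb.2.trans hav.2
  have hmid : ∀ u : Fin n, a < u → u < b → π b < π u ∧ π u < π a := by
    intro u h1 h2
    have huS : u ∉ S := by
      intro huS
      rcases honly u huS with rfl | rfl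
      · exact lt_irrefl _ h1
      · exact lt_irrefl _ h2
    have hiff := hmod u huS a ha b hb
    by_cases hadj : (invGraph π).Adj u a
    · have hadjb := hiff.mp hadj
      rw [adj_iff] at hadj hadjb
      rcases hadj with h | h
      · exact absurd h.1 (asymm h1)
      · rcases hadjb with h' | h'
        · exact ⟨h'.2, h.2⟩
        · exact absurd h'.1 (asymm h2)
    · have hnadjb : ¬ (invGraph π).Adj u b := fun hh => hadj (hiff.mpr hh)
      rcases lt2_or π (ne_of_gt h1) hadj with h | h
      · exact absurd h.1 (asymm h1)
      · rcases lt2_or π (ne_of_lt h2) hnadjb with h' | h'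
        · exact absurd hvab (not_lt.mpr ((h.2.trans h'.2).le))
        · exact absurd h'.1 (asymm h2)
  have himg : (⇑π) '' {u : Fin n | a ≤ u ∧ u < b} = {w | π b < w ∧ w ≤ π a} := by
    ext w
    constructor
    · rintro ⟨u, ⟨h1, h2⟩, rfl⟩
      rcases eq_or_lt_of_le h1 with rfl | h1'
      · exact ⟨hvab, le_refl _⟩
      · exact ⟨(hmid u h1' h2).1, (hmid u h1' h2).2.le⟩
    · rintro ⟨h1, h2⟩
      refine ⟨π.symm w, ?_, π.apply_symm_apply w⟩
      have hpu : π (π.symm w) = w := π.apply_symm_apply w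
      rw [← hpu] at h1 h2
      generalize π.symm w = u at *
      rcases eq_or_lt_of_le h2 with he | h2'
      · have : u = a := π.injective he
        rw [this]; exact ⟨le_refl _, hab⟩
      · have hune_a : u ≠ a := fun h => absurd h2' (h ▸ lt_irrefl _)
        have hune_b : u ≠ b := fun h => absurd h1 (h ▸ lt_irrefl _)
        have huS : u ∉ S := by
          intro huS; rcases honly u huS with h | h
          · exact hune_a h
          · exact hune_b h
        have hiff := hmod u huS a ha b hb
        rcases lt_trichotomy u a with hua | hua | hua
        · exfalso
          by_cases hadj : (invGraph π).Adj u a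
          · rw [adj_iff] at hadj
            rcases hadj with h | h
            · exact absurd h.2 (asymm h2')
            · exact absurd h.1 (asymm hua)
          · have h3 := lt2_or π (ne_of_lt hua) hadj
            rcases h3 with h | h
            · have hnadjb : ¬ (invGraph π).Adj u b := fun hh => hadj (hiff.mpr hh)
              rcases lt2_or π (ne_of_lt (hua.trans hab)) hnadjb with h' | h'
              · exact absurd h'.2 (asymm h1)
              · exact absurd h'.1 (asymm (hua.trans hab))
            · exact absurd h.1 (asymm hua)
        · exact absurd hua hune_a
        · have hub : u < b := by
            rcases lt_trichotomy u b with h | h | h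
            · exact h
            · exact absurd h hune_b
            · exfalso
              have hadja : (invGraph π).Adj u a := by
                rw [adj_iff]; exact Or.inr ⟨hua, h2'⟩
              have hadjb := hiff.mp hadja
              rw [adj_iff] at hadjb
              rcases hadjb with h' | h'
              · exact absurd h'.1 (asymm h)
              · exact absurd h'.2 (asymm h1)
          exact ⟨hua.le, hub⟩
  have hint : IsPermInterval π {u : Fin n | a ≤ u ∧ u < b} := by
    constructor
    · intro x y z hx hz hxy hyz
      exact ⟨hx.1.trans hxy, lt_of_le_of_lt hyz hz.2⟩
    · intro x y z hx hz hxy hyz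
      rw [himg] at hx hz ⊢
      exact ⟨lt_of_lt_of_le hx.1 hxy, hyz.trans hz.2⟩
  rcases hπ _ hint with h | h
  · have : 1 < Set.ncard {u : Fin n | a ≤ u ∧ u < b} := by
      rw [Set.one_lt_ncard (Set.toFinite _)]
      exact ⟨a, ⟨le_refl a, hab⟩, v, ⟨hav.1.le, hvb.1⟩, ne_of_lt hav.1⟩
    omega
  · have : b ∈ {u : Fin n | a ≤ u ∧ u < b} := h ▸ Set.mem_univ b
    exact lt_irrefl b this.2


lemma prime_aux (π : Equiv.Perm (Fin n)) (hπ : IsSimplePerm π) :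
    ∀ m (S : Set (Fin n)), IsMod π S → S.ncard = m → 2 ≤ S.ncard → S ≠ Set.univ → False := by
  intro m
  induction m using Nat.strong_induction_on with
  | _ m IH =>
  intro S hmod hcard h2 huniv
  by_cases hmix2 : ∃ a ∈ S, ∃ b ∈ S, ∃ v, v ∉ S ∧ Lt2 π a v ∧ Lt2 π v b
  · obtain ⟨a, ha, b, hb, v, hv, hav, hvb⟩ := hmix2
    have hnadj : ∀ u ∈ S, ¬ (invGraph π).Adj v u := by
      intro u hu hadj
      exact lt2_not_adj hav (((hmod v hv a ha u hu).mpr hadj).symm)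
    have hcov : ∀ u ∈ S, Lt2 π u v ∨ Lt2 π v u := by
      intro u hu
      have hne : v ≠ u := fun h => hv (h ▸ hu)
      rcases lt2_or π hne (hnadj u hu) with h | h
      · exact Or.inr h
      · exact Or.inl h
    set A : Set (Fin n) := {x | x ∈ S ∧ Lt2 π x v} with hA
    set B : Set (Fin n) := {x | x ∈ S ∧ Lt2 π v x} with hB
    have hmodA : IsMod π A := by
      intro u hu x hx y hy
      by_cases hus : u ∈ S
      · have huv : Lt2 π v u := by
          rcases hcov u hus with h | h
          · exact absurd (⟨hus, h⟩ : u ∈ A) hu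
          · exact h
        exact iff_of_false (fun hh => (lt2_not_adj (lt2_trans hx.2 huv)) hh.symm)
          (fun hh => (lt2_not_adj (lt2_trans hy.2 huv)) hh.symm)
      · exact hmod u hus x hx.1 y hy.1
    have hmodB : IsMod π B := by
      intro u hu x hx y hy
      by_cases hus : u ∈ S
      · have huv : Lt2 π u v := by
          rcases hcov u hus with h | h
          · exact h
          · exact absurd (⟨hus, h⟩ : u ∈ B) hu
        exact iff_of_false (fun hh => (lt2_not_adj (lt2_trans huv hx.2)) hh)
          (fun hh => (lt2_not_adj (lt2_trans huv hy.2)) hh)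
      · exact hmod u hus x hx.1 y hy.1
    have haA : a ∈ A := ⟨ha, hav⟩
    have hbB : b ∈ B := ⟨hb, hvb⟩
    have hbA : b ∉ A := fun h => lt_irrefl v (hvb.1.trans h.2.1)
    have haB : a ∉ B := fun h => lt_irrefl v (h.2.1.trans hav.1)
    have hAS : A ⊂ S := ⟨fun x hx => hx.1, fun hcon => hbA (hcon hb)⟩
    have hBS : B ⊂ S := ⟨fun x hx => hx.1, fun hcon => haB (hcon ha)⟩
    by_cases h2A : 2 ≤ A.ncard
    · exact IH A.ncard (hcard ▸ Set.ncard_lt_ncard hAS (Set.toFinite S)) A hmodA rfl h2A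
        (fun h => hbA (h ▸ Set.mem_univ b))
    · by_cases h2B : 2 ≤ B.ncard
      · exact IH B.ncard (hcard ▸ Set.ncard_lt_ncard hBS (Set.toFinite S)) B hmodB rfl h2B
          (fun h => haB (h ▸ Set.mem_univ a))
      · have hA1 : ∀ x ∈ A, ∀ y ∈ A, x = y := (Set.ncard_le_one (Set.toFinite A)).mp (by omega)
        have hB1 : ∀ x ∈ B, ∀ y ∈ B, x = y := (Set.ncard_le_one (Set.toFinite B)).mp (by omega)
        have honly : ∀ x ∈ S, x = a ∨ x = b := by
          intro x hx
          rcases hcov x hx with h | h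
          · exact Or.inl (hA1 x ⟨hx, h⟩ a haA)
          · exact Or.inr (hB1 x ⟨hx, h⟩ b hbB)
        exact pair2 π hπ hmod ha hb hv honly hav hvb
  · by_cases hmix3 : ∃ a ∈ S, ∃ b ∈ S, ∃ v, v ∉ S ∧ Lt3 π a v ∧ Lt3 π v b
    · obtain ⟨a, ha, b, hb, v, hv, hav, hvb⟩ := hmix3
      have hadjall : ∀ u ∈ S, (invGraph π).Adj v u := by
        intro u hu
        exact (hmod v hv a ha u hu).mp ((lt3_adj hav).symm)
      have hcov : ∀ u ∈ S, Lt3 π u v ∨ Lt3 π v u := by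
        intro u hu
        have h := hadjall u hu
        rw [adj_iff] at h
        rcases h with h | h
        · exact Or.inr h
        · exact Or.inl h
      set A : Set (Fin n) := {x | x ∈ S ∧ Lt3 π x v} with hA
      set B : Set (Fin n) := {x | x ∈ S ∧ Lt3 π v x} with hB
      have hmodA : IsMod π A := by
        intro u hu x hx y hy
        by_cases hus : u ∈ S
        · have huv : Lt3 π v u := by
            rcases hcov u hus with h | h
            · exact absurd (⟨hus, h⟩ : u ∈ A) hu
            · exact h
          exact iff_of_true ((lt3_adj (lt3_trans hx.2 huv)).symm)
            ((lt3_adj (lt3_trans hy.2 huv)).symm)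
        · exact hmod u hus x hx.1 y hy.1
      have hmodB : IsMod π B := by
        intro u hu x hx y hy
        by_cases hus : u ∈ S
        · have huv : Lt3 π u v := by
            rcases hcov u hus with h | h
            · exact h
            · exact absurd (⟨hus, h⟩ : u ∈ B) hu
          exact iff_of_true (lt3_adj (lt3_trans huv hx.2)) (lt3_adj (lt3_trans huv hy.2))
        · exact hmod u hus x hx.1 y hy.1
      have haA : a ∈ A := ⟨ha, hav⟩
      have hbB : b ∈ B := ⟨hb, hvb⟩
      have hbA : b ∉ A := fun h => lt_irrefl v (hvb.1.trans h.2.1)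
      have haB : a ∉ B := fun h => lt_irrefl v (h.2.1.trans hav.1)
      have hAS : A ⊂ S := ⟨fun x hx => hx.1, fun hcon => hbA (hcon hb)⟩
      have hBS : B ⊂ S := ⟨fun x hx => hx.1, fun hcon => haB (hcon ha)⟩
      by_cases h2A : 2 ≤ A.ncard
      · exact IH A.ncard (hcard ▸ Set.ncard_lt_ncard hAS (Set.toFinite S)) A hmodA rfl h2A
          (fun h => hbA (h ▸ Set.mem_univ b))
      · by_cases h2B : 2 ≤ B.ncard
        · exact IH B.ncard (hcard ▸ Set.ncard_lt_ncard hBS (Set.toFinite S)) B hmodB rfl h2B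
            (fun h => haB (h ▸ Set.mem_univ a))
        · have hA1 : ∀ x ∈ A, ∀ y ∈ A, x = y := (Set.ncard_le_one (Set.toFinite A)).mp (by omega)
          have hB1 : ∀ x ∈ B, ∀ y ∈ B, x = y := (Set.ncard_le_one (Set.toFinite B)).mp (by omega)
          have honly : ∀ x ∈ S, x = a ∨ x = b := by
            intro x hx
            rcases hcov x hx with h | h
            · exact Or.inl (hA1 x ⟨hx, h⟩ a haA)
            · exact Or.inr (hB1 x ⟨hx, h⟩ b hbB)
          exact pair3 π hπ hmod ha hb hv honly hav hvb
    · -- no mixed externals: S itself is an interval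
      have hint : IsPermInterval π S := by
        constructor
        · intro x y z hx hz hxy hyz
          by_contra hy
          have hxy' : x < y := lt_of_le_of_ne hxy (fun h => hy (h ▸ hx))
          have hyz' : y < z := lt_of_le_of_ne hyz (fun h => hy (h.symm ▸ hz))
          have hiff := hmod y hy x hx z hz
          by_cases hadj : (invGraph π).Adj y x
          · have hadjz := hiff.mp hadj
            rw [adj_iff] at hadj hadjz
            rcases hadj with h | h
            · exact absurd h.1 (asymm hxy')
            · rcases hadjz with h' | h'
              · exact hmix3 ⟨x, hx, z, hz, y, hy, ⟨hxy', h.2⟩, ⟨hyz', h'.2⟩⟩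
              · exact absurd h'.1 (asymm hyz')
          · have hnadjz : ¬ (invGraph π).Adj y z := fun hh => hadj (hiff.mpr hh)
            rcases lt2_or π (ne_of_gt hxy') hadj with h | h
            · exact absurd h.1 (asymm hxy')
            · rcases lt2_or π (ne_of_lt hyz') hnadjz with h' | h'
              · exact hmix2 ⟨x, hx, z, hz, y, hy, ⟨hxy', h.2⟩, ⟨hyz', h'.2⟩⟩
              · exact absurd h'.1 (asymm hyz')
        · rintro w1 w w2 ⟨x, hx, rfl⟩ ⟨z, hz, rfl⟩ h1 h2
          have hpu : π (π.symm w) = w := π.apply_symm_apply w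
          have huS : π.symm w ∈ S := by
            rw [← hpu] at h1 h2
            generalize π.symm w = u at *
            by_contra hu
            rcases eq_or_lt_of_le h1 with he | h1'
            · exact hu ((π.injective he) ▸ hx)
            rcases eq_or_lt_of_le h2 with he | h2'
            · exact hu ((π.injective he) ▸ hz)
            have hiff := hmod u hu x hx z hz
            rcases lt_trichotomy u x with hux | hux | hux
            · have hadjx : (invGraph π).Adj u x := by
                by_contra hn
                rcases lt2_or π (ne_of_lt hux) hn with h | h
                · exact absurd h.2 (asymm h1')
                · exact absurd h.1 (asymm hux)
              have hadjz := hiff.mp hadjx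
              rw [adj_iff] at hadjz
              rcases hadjz with h | h
              · exact absurd h.2 (asymm h2')
              · exact hmix3 ⟨z, hz, x, hx, u, hu, ⟨h.1, h2'⟩, ⟨hux, h1'⟩⟩
            · exact hu (hux ▸ hx)
            · have hnadjx : ¬ (invGraph π).Adj u x := by
                intro h
                rw [adj_iff] at h
                rcases h with h | h
                · exact absurd h.1 (asymm hux)
                · exact absurd h.2 (asymm h1')
              have hnadjz : ¬ (invGraph π).Adj u z := fun h => hnadjx (hiff.mpr h)
              rcases lt_trichotomy u z with huz | huz | huz
              · exact hmix2 ⟨x, hx, z, hz, u, hu, ⟨hux, h1'⟩, ⟨huz, h2'⟩⟩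
              · exact hu (huz ▸ hz)
              · rcases lt2_or π (ne_of_gt huz) hnadjz with h | h
                · exact absurd h.1 (asymm huz)
                · exact absurd h.2 (asymm h2')
          exact ⟨π.symm w, huS, hpu⟩
      rcases hπ S hint with h | h
      · omega
      · exact huniv h

lemma prime (π : Equiv.Perm (Fin n)) (hπ : IsSimplePerm π) {S : Set (Fin n)}
    (hmod : IsMod π S) (h2 : 2 ≤ S.ncard) (huniv : S ≠ Set.univ) : False :=
  prime_aux π hπ S.ncard S hmod rfl h2 huniv


/-! ### Γ-steps between non-edges and implication classes -/

def Gstep (π : Equiv.Perm (Fin n)) (p q : Fin n × Fin n) : Prop :=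
  Lt2 π p.1 p.2 ∧ Lt2 π q.1 q.2 ∧
    ((p.1 = q.1 ∧ (invGraph π).Adj p.2 q.2) ∨ (p.2 = q.2 ∧ (invGraph π).Adj p.1 q.1))

def Cls (π : Equiv.Perm (Fin n)) : (Fin n × Fin n) → (Fin n × Fin n) → Prop :=
  Relation.ReflTransGen (Gstep π)

lemma gstep_symm {π : Equiv.Perm (Fin n)} : Symmetric (Gstep π) := by
  rintro p q ⟨h1, h2, ⟨he, ha⟩ | ⟨he, ha⟩⟩
  · exact ⟨h2, h1, Or.inl ⟨he.symm, ha.symm⟩⟩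
  · exact ⟨h2, h1, Or.inr ⟨he.symm, ha.symm⟩⟩

lemma cls_symm {π : Equiv.Perm (Fin n)} {p q} (h : Cls π p q) : Cls π q p :=
  haveI : Std.Symm (Gstep π) := ⟨fun _ _ hh => gstep_symm hh⟩
  Relation.ReflTransGen.symmetric.symm _ _ h

lemma cls_trans {π : Equiv.Perm (Fin n)} {p q r} (h1 : Cls π p q) (h2 : Cls π q r) :
    Cls π p r := Relation.ReflTransGen.trans h1 h2

lemma cls_lt2 {π : Equiv.Perm (Fin n)} {p q} (hp : Lt2 π p.1 p.2) (h : Cls π p q) :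
    Lt2 π q.1 q.2 := by
  induction h with
  | refl => exact hp
  | tail _ hstep _ => exact hstep.2.1

def spanOf (π : Equiv.Perm (Fin n)) (p : Fin n × Fin n) : Set (Fin n) :=
  {x | ∃ q, Cls π p q ∧ (x = q.1 ∨ x = q.2)}

lemma perPair {π : Equiv.Perm (Fin n)} {p : Fin n × Fin n} (hp : Lt2 π p.1 p.2)
    {v : Fin n} (hv : v ∉ spanOf π p) {q} (hq : Cls π p q) :
    ((invGraph π).Adj v q.1 ↔ (invGraph π).Adj v q.2) := by
  have hq2 : Lt2 π q.1 q.2 := cls_lt2 hp hq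
  constructor
  · intro hadj1
    by_contra hnadj2
    have hne : v ≠ q.2 := fun h => (lt2_not_adj hq2) ((h ▸ hadj1).symm)
    rcases lt2_or π hne hnadj2 with h | h
    · exact hv ⟨(v, q.2), hq.tail ⟨hq2, h, Or.inr ⟨rfl, hadj1.symm⟩⟩, Or.inl rfl⟩
    · exact (lt2_not_adj (lt2_trans hq2 h)) hadj1.symm
  · intro hadj2
    by_contra hnadj1
    have hne : v ≠ q.1 := fun h => (lt2_not_adj hq2) (h ▸ hadj2)
    rcases lt2_or π hne hnadj1 with h | h
    · exact (lt2_not_adj (lt2_trans h hq2)) hadj2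
    · exact hv ⟨(q.1, v), hq.tail ⟨hq2, h, Or.inl ⟨rfl, hadj2.symm⟩⟩, Or.inr rfl⟩

lemma propagate {π : Equiv.Perm (Fin n)} {p : Fin n × Fin n} (hp : Lt2 π p.1 p.2)
    {v : Fin n} (hv : v ∉ spanOf π p) {q} (hq : Cls π p q) :
    ((invGraph π).Adj v q.1 ↔ (invGraph π).Adj v p.1) := by
  induction hq with
  | refl => exact Iff.rfl
  | tail hpb hstep ih =>
    rename_i b c
    rcases hstep.2.2 with ⟨heq, _⟩ | ⟨heq, _⟩
    · exact (heq ▸ ih)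
    · calc (invGraph π).Adj v c.1 ↔ (invGraph π).Adj v c.2 :=
            perPair hp hv (hpb.tail hstep)
        _ ↔ (invGraph π).Adj v b.2 := by rw [heq]
        _ ↔ (invGraph π).Adj v b.1 := (perPair hp hv hpb).symm
        _ ↔ (invGraph π).Adj v p.1 := ih

lemma spanMod {π : Equiv.Perm (Fin n)} {p : Fin n × Fin n} (hp : Lt2 π p.1 p.2) :
    IsMod π (spanOf π p) := by
  intro v hv x hx y hy
  have key : ∀ z ∈ spanOf π p, ((invGraph π).Adj v z ↔ (invGraph π).Adj v p.1) := by
    rintro z ⟨q, hq, hz | hz⟩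
    · exact hz ▸ propagate hp hv hq
    · exact hz ▸ ((perPair hp hv hq).symm.trans (propagate hp hv hq))
  exact (key x hx).trans (key y hy).symm

lemma spanFull {π : Equiv.Perm (Fin n)} (hπ : IsSimplePerm π) {p : Fin n × Fin n}
    (hp : Lt2 π p.1 p.2) : spanOf π p = Set.univ := by
  by_contra h
  apply prime π hπ (spanMod hp) ?_ h
  have h1 : p.1 ∈ spanOf π p := ⟨p, Relation.ReflTransGen.refl, Or.inl rfl⟩
  have h2 : p.2 ∈ spanOf π p := ⟨p, Relation.ReflTransGen.refl, Or.inr rfl⟩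
  have := (Set.one_lt_ncard (Set.toFinite _)).mpr ⟨p.1, h1, p.2, h2, lt2_ne hp⟩
  omega

/-! ### normalized pairs and the triangle lemma -/

def Cmp (π : Equiv.Perm (Fin n)) (a x : Fin n) : Prop := Lt2 π a x ∨ Lt2 π x a

lemma cmp_ne {π : Equiv.Perm (Fin n)} {a x : Fin n} (h : Cmp π a x) : a ≠ x := by
  rcases h with h | h
  · exact lt2_ne h
  · exact (lt2_ne h).symm

lemma cmp_not_adj {π : Equiv.Perm (Fin n)} {a x : Fin n} (h : Cmp π a x) :
    ¬ (invGraph π).Adj a x := by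
  rcases h with h | h
  · exact lt2_not_adj h
  · exact fun hh => lt2_not_adj h hh.symm

lemma cmp_symm {π : Equiv.Perm (Fin n)} {a x : Fin n} (h : Cmp π a x) : Cmp π x a :=
  h.symm

def nrm (a x : Fin n) : Fin n × Fin n := if a < x then (a, x) else (x, a)

lemma nrm_of_lt {a x : Fin n} (h : a < x) : nrm a x = (a, x) := if_pos h
lemma nrm_of_gt {a x : Fin n} (h : x < a) : nrm a x = (x, a) := if_neg (asymm h)

lemma nrm_comm {a x : Fin n} (h : a ≠ x) : nrm a x = nrm x a := by
  rcases lt_or_gt_of_ne h with h' | h'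
  · rw [nrm_of_lt h', nrm_of_gt h']
  · rw [nrm_of_gt h', nrm_of_lt h']

lemma nrm_lt2 {π : Equiv.Perm (Fin n)} {a x : Fin n} (h : Cmp π a x) :
    Lt2 π (nrm a x).1 (nrm a x).2 := by
  rcases h with h | h
  · rw [nrm_of_lt h.1]; exact h
  · rw [nrm_of_gt h.1]; exact h

/-- If `y` and `y'` are both comparable with `a` and adjacent to each other,
then the normalized pairs `{a,y}` and `{a,y'}` are Γ-related. -/
lemma nrm_step {π : Equiv.Perm (Fin n)} {a y y' : Fin n} (h1 : Cmp π a y)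
    (h2 : Cmp π a y') (hadj : (invGraph π).Adj y y') :
    Cls π (nrm a y) (nrm a y') := by
  rcases h1 with h1 | h1 <;> rcases h2 with h2 | h2
  · rw [nrm_of_lt h1.1, nrm_of_lt h2.1]
    exact Relation.ReflTransGen.single ⟨h1, h2, Or.inl ⟨rfl, hadj⟩⟩
  · exact absurd hadj (fun hh => lt2_not_adj (lt2_trans h2 h1) hh.symm)
  · exact absurd hadj (lt2_not_adj (lt2_trans h1 h2))
  · rw [nrm_of_gt h1.1, nrm_of_gt h2.1]
    exact Relation.ReflTransGen.single ⟨h1, h2, Or.inr ⟨rfl, hadj⟩⟩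

/-- Triangle lemma: invariant along a Γ-class avoiding the apex `a`. -/
lemma TL (π : Equiv.Perm (Fin n)) {a s t : Fin n} (hst : Lt2 π s t)
    (hcas : Cmp π a s) (hcat : Cmp π a t)
    (hA1 : ¬ Cls π (s, t) (nrm a s)) (hA2 : ¬ Cls π (s, t) (nrm a t)) :
    ∀ q, Cls π (s, t) q →
      q.1 ≠ a ∧ q.2 ≠ a ∧ Cmp π a q.1 ∧ Cmp π a q.2 ∧
      Cls π (nrm a q.1) (nrm a s) ∧ Cls π (nrm a q.2) (nrm a t) := by
  intro q hq
  induction hq with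
  | refl =>
    exact ⟨(cmp_ne hcas).symm, (cmp_ne hcat).symm, hcas, hcat,
      Relation.ReflTransGen.refl, Relation.ReflTransGen.refl⟩
  | tail hpb hstep ih =>
    rename_i b c
    obtain ⟨ihb1, ihb2, ihcb1, ihcb2, ihs, iht⟩ := ih
    have hb2 : Lt2 π b.1 b.2 := hstep.1
    have hc2 : Lt2 π c.1 c.2 := hstep.2.1
    have hclsc : Cls π (s, t) c := hpb.tail hstep
    rcases hstep.2.2 with ⟨heq, hadj⟩ | ⟨heq, hadj⟩
    · -- share bottom: b.1 = c.1, Adj b.2 c.2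
      have hc1a : c.1 ≠ a := heq ▸ ihb1
      have hc2a : c.2 ≠ a := by
        intro h
        exact cmp_not_adj ihcb2 ((h ▸ hadj).symm)
      have hcmp1 : Cmp π a c.1 := heq ▸ ihcb1
      have hcmp2 : Cmp π a c.2 := by
        by_cases hadja : (invGraph π).Adj a c.2
        · exfalso
          rcases hcmp1 with h | h
          · exact lt2_not_adj (lt2_trans h hc2) hadja
          · -- Lt2 c.1 a : form the pair (c.1, a) and contradict hA1
            have hstep2 : Gstep π c (c.1, a) := ⟨hc2, h, Or.inl ⟨rfl, hadja.symm⟩⟩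
            apply hA1
            have hnrm : nrm a c.1 = (c.1, a) := nrm_of_gt h.1
            have h1 : Cls π (s, t) (c.1, a) := hclsc.tail hstep2
            have h2 : Cls π (c.1, a) (nrm a s) := hnrm ▸ (heq ▸ ihs)
            exact cls_trans h1 h2
        · exact lt2_or π (Ne.symm hc2a) hadja
      have hclst : Cls π (nrm a c.2) (nrm a t) :=
        cls_trans (nrm_step hcmp2 ihcb2 hadj.symm) iht
      exact ⟨hc1a, hc2a, hcmp1, hcmp2, heq ▸ ihs, hclst⟩
    · -- share top: b.2 = c.2, Adj b.1 c.1
      have hc2a : c.2 ≠ a := heq ▸ ihb2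
      have hc1a : c.1 ≠ a := by
        intro h
        exact cmp_not_adj ihcb1 ((h ▸ hadj).symm)
      have hcmp2 : Cmp π a c.2 := heq ▸ ihcb2
      have hcmp1 : Cmp π a c.1 := by
        by_cases hadja : (invGraph π).Adj a c.1
        · exfalso
          rcases hcmp2 with h | h
          ·
            -- here h : Lt2 a c.2; form pair (a, c.2)?? need contradiction with hA2 : pair (a, c.1)?
            -- Gstep c (a, c.2): share top c.2, Adj c.1 a
            have hstep2 : Gstep π c (a, c.2) := ⟨hc2, h, Or.inr ⟨rfl, hadja.symm⟩⟩
            apply hA2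
            have hnrm : nrm a c.2 = (a, c.2) := nrm_of_lt h.1
            exact cls_trans (hclsc.tail hstep2) (hnrm ▸ (heq ▸ iht))
          · exact lt2_not_adj (lt2_trans hc2 h) (hadja.symm)
        · exact lt2_or π (Ne.symm hc1a) hadja
      have hclss : Cls π (nrm a c.1) (nrm a s) :=
        cls_trans (nrm_step hcmp1 ihcb1 hadj.symm) ihs
      exact ⟨hc1a, hc2a, hcmp1, hcmp2, hclss, heq ▸ iht⟩


/-- In the inversion graph of a simple permutation, every triangle `a, s, t`
of pairwise comparable points has Γ-related pairs. -/
lemma triangleCls {π : Equiv.Perm (Fin n)} (hπ : IsSimplePerm π) {a s t : Fin n}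
    (hst : Lt2 π s t) (hcas : Cmp π a s) (hcat : Cmp π a t) :
    Cls π (s, t) (nrm a s) ∨ Cls π (s, t) (nrm a t) := by
  by_contra h
  push_neg at h
  have hTL := TL π hst hcas hcat h.1 h.2
  have ha : a ∈ spanOf π (s, t) := by
    rw [spanFull hπ (p := (s, t)) hst]
    trivial
  obtain ⟨q, hq, hor⟩ := ha
  rcases hor with h' | h'
  · exact (hTL q hq).1 h'.symm
  · exact (hTL q hq).2.1 h'.symm

/-- Connectivity: any two non-edges are Γ-related (for simple `π`). -/
lemma connect {π : Equiv.Perm (Fin n)} (hπ : IsSimplePerm π) {u w c d : Fin n}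
    (huw : Lt2 π u w) (hcd : Lt2 π c d) : Cls π (u, w) (c, d) := by
  suffices h : Cls π (c, d) (u, w) from cls_symm h
  have hu : u ∈ spanOf π (c, d) := by
    rw [spanFull hπ (p := (c, d)) hcd]; trivial
  obtain ⟨⟨r1, r2⟩, hr, hor⟩ := hu
  have hr2 : Lt2 π r1 r2 := cls_lt2 hcd hr
  rcases hor with h' | h'
  · -- u = r1
    subst h'
    by_cases hxw : r2 = w
    · subst hxw; exact hr
    by_cases hadj : (invGraph π).Adj r2 w
    · exact hr.tail ⟨hr2, huw, Or.inl ⟨rfl, hadj⟩⟩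
    · have hcmpxw : Cmp π r2 w := lt2_or π hxw hadj
      have hcmpxu : Cmp π r2 u := Or.inr hr2
      have h5a := triangleCls hπ huw hcmpxu hcmpxw
      have hnrmxu : nrm r2 u = (u, r2) := nrm_of_gt hr2.1
      rcases h5a with h5 | h5
      · rw [hnrmxu] at h5
        exact cls_trans hr (cls_symm h5)
      · have h5b := triangleCls hπ hr2 (Or.inr huw : Cmp π w u) (hcmpxw.symm)
        have hnrmwu : nrm w u = (u, w) := nrm_of_gt huw.1
        rcases h5b with h6 | h6
        · rw [hnrmwu] at h6
          exact cls_trans hr h6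
        · rw [nrm_comm (fun hh : w = r2 => hxw hh.symm)] at h6
          exact cls_trans hr (cls_trans h6 (cls_symm h5))
  · -- u = r2
    subst h'
    have hxw : Lt2 π r1 w := lt2_trans hr2 huw
    have h5a := triangleCls hπ huw (Or.inl hr2 : Cmp π r1 u) (Or.inl hxw)
    have h1 : nrm r1 u = (r1, u) := nrm_of_lt hr2.1
    rcases h5a with h5 | h5
    · rw [h1] at h5
      exact cls_trans hr (cls_symm h5)
    · rw [nrm_of_lt hxw.1] at h5
      have h5b := triangleCls hπ hr2 (Or.inr hxw : Cmp π w r1) (Or.inr huw : Cmp π w u)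
      rcases h5b with h6 | h6
      · rw [nrm_of_gt hxw.1] at h6
        exact cls_trans hr (cls_trans h6 (cls_symm h5))
      · rw [nrm_of_gt huw.1] at h6
        exact cls_trans hr h6

/-- The sign of an automorphism on a non-edge is invariant under Γ-steps. -/
lemma gstep_invar {π : Equiv.Perm (Fin n)} (φ : invGraph π ≃g invGraph π)
    {p q : Fin n × Fin n} (h : Gstep π p q) :
    (Lt2 π (φ p.1) (φ p.2) ↔ Lt2 π (φ q.1) (φ q.2)) := by
  obtain ⟨hp2, hq2, hcase⟩ := h
  have him : ∀ {i j : Fin n}, Lt2 π i j → Cmp π (φ i) (φ j) := by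
    intro i j hij
    refine lt2_or π (fun hh => lt2_ne hij (φ.injective hh)) ?_
    exact fun hh => lt2_not_adj hij (φ.map_adj_iff.mp hh)
  have hadjim : ∀ {i j : Fin n}, (invGraph π).Adj i j →
      (invGraph π).Adj (φ i) (φ j) := fun hh => φ.map_adj_iff.mpr hh
  rcases hcase with ⟨heq, hadj⟩ | ⟨heq, hadj⟩
  · have hadj' := hadjim hadj
    constructor
    · intro h1
      rcases him hq2 with h2 | h2
      · exact h2
      · rw [heq] at h1
        exact absurd hadj' (fun hh => lt2_not_adj (lt2_trans h2 h1) hh.symm)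
    · intro h1
      rcases him hp2 with h2 | h2
      · exact h2
      · rw [heq] at h2
        exact absurd hadj' (lt2_not_adj (lt2_trans h2 h1))
  · have hadj' := hadjim hadj
    constructor
    · intro h1
      rcases him hq2 with h2 | h2
      · exact h2
      · rw [heq] at h1
        exact absurd hadj' (lt2_not_adj (lt2_trans h1 h2))
    · intro h1
      rcases him hp2 with h2 | h2
      · exact h2
      · rw [heq] at h2
        exact absurd hadj' (fun hh => lt2_not_adj (lt2_trans h1 h2) hh.symm)

/-- Sign constancy on non-edges. -/
lemma sconst {π : Equiv.Perm (Fin n)} (hπ : IsSimplePerm π)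
    (φ : invGraph π ≃g invGraph π) {i j k l : Fin n}
    (hij : Lt2 π i j) (hkl : Lt2 π k l) :
    (Lt2 π (φ i) (φ j) ↔ Lt2 π (φ k) (φ l)) := by
  have hcls := connect hπ hij hkl
  suffices h : ∀ q, Cls π (i, j) q → (Lt2 π (φ i) (φ j) ↔ Lt2 π (φ q.1) (φ q.2)) from
    h (k, l) hcls
  intro q hq
  induction hq with
  | refl => exact Iff.rfl
  | tail _ hstep ih => exact ih.trans (gstep_invar φ hstep)


/-! ### Reversal: the complement of an inversion graph is again one -/

lemma lt3_rev_iff (π : Equiv.Perm (Fin n)) (i j : Fin n) :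
    Lt3 (π * Fin.revPerm) i j ↔ Lt2 π j.rev i.rev := by
  unfold Lt2 Lt3
  rw [Fin.rev_lt_rev]
  simp [Equiv.Perm.mul_apply]

lemma lt2_rev_iff (π : Equiv.Perm (Fin n)) (a b : Fin n) :
    Lt2 (π * Fin.revPerm) b.rev a.rev ↔ Lt3 π a b := by
  unfold Lt2 Lt3
  rw [Fin.rev_lt_rev]
  simp [Equiv.Perm.mul_apply]

lemma adj_rev_iff (π : Equiv.Perm (Fin n)) (i j : Fin n) :
    (invGraph (π * Fin.revPerm)).Adj i j ↔
      (i.rev ≠ j.rev ∧ ¬ (invGraph π).Adj i.rev j.rev) := by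
  rw [adj_iff, lt3_rev_iff, lt3_rev_iff]
  constructor
  · rintro (h | h)
    · exact ⟨(ne_of_lt h.1).symm, fun hh => lt2_not_adj h hh.symm⟩
    · exact ⟨ne_of_lt h.1, lt2_not_adj h⟩
  · rintro ⟨hne, hnadj⟩
    rcases lt2_or π hne hnadj with h | h
    · exact Or.inr h
    · exact Or.inl h

lemma simple_rev {π : Equiv.Perm (Fin n)} (hπ : IsSimplePerm π) :
    IsSimplePerm (π * Fin.revPerm) := by
  intro I hI
  have hrevI : ∀ x : Fin n, x ∈ Fin.rev '' I ↔ x.rev ∈ I := by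
    intro x
    constructor
    · rintro ⟨y, hy, rfl⟩; rwa [Fin.rev_rev]
    · intro h; exact ⟨x.rev, h, Fin.rev_rev x⟩
  have hJ : IsPermInterval π (Fin.rev '' I) := by
    constructor
    · intro a b c ha hc hab hbc
      rw [hrevI] at ha hc ⊢
      exact hI.1 hc ha (by rwa [Fin.rev_le_rev]) (by rwa [Fin.rev_le_rev])
    · have himg : (⇑π) '' (Fin.rev '' I) = (⇑(π * (Fin.revPerm : Equiv.Perm (Fin n)))) '' I := by
        rw [Set.image_image]
        apply Set.image_congr
        intro x _
        rw [Equiv.Perm.mul_apply, Fin.revPerm_apply]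
      rw [himg]
      exact hI.2
  rcases hπ _ hJ with h | h
  · left
    rwa [Set.ncard_image_of_injective I Fin.rev_injective] at h
  · right
    ext x
    simp only [Set.mem_univ, iff_true]
    have : x.rev ∈ Fin.rev '' I := h ▸ Set.mem_univ _
    rw [hrevI, Fin.rev_rev] at this
    exact this

/-- Transport an automorphism to the reversed permutation's graph. -/
def revIso (π : Equiv.Perm (Fin n)) (φ : invGraph π ≃g invGraph π) :
    invGraph (π * Fin.revPerm) ≃g invGraph (π * Fin.revPerm) where
  toEquiv := Fin.revPerm.trans (φ.toEquiv.trans Fin.revPerm)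
  map_rel_iff' := by
    intro a b
    show (invGraph (π * Fin.revPerm)).Adj ((φ a.rev).rev) ((φ b.rev).rev) ↔ _
    rw [adj_rev_iff, adj_rev_iff]
    simp only [Fin.rev_rev]
    constructor
    · rintro ⟨hne, hnadj⟩
      exact ⟨fun h => hne (congrArg _ h), fun h => hnadj (φ.map_adj_iff.mpr h)⟩
    · rintro ⟨hne, hnadj⟩
      exact ⟨fun h => hne (φ.injective h), fun h => hnadj (φ.map_adj_iff.mp h)⟩

lemma revIso_apply (π : Equiv.Perm (Fin n)) (φ : invGraph π ≃g invGraph π) (x : Fin n) :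
    revIso π φ x = (φ x.rev).rev := rfl

/-- Sign constancy on edges. -/
lemma tconst {π : Equiv.Perm (Fin n)} (hπ : IsSimplePerm π)
    (φ : invGraph π ≃g invGraph π) {a b c d : Fin n}
    (hab : Lt3 π a b) (hcd : Lt3 π c d) :
    (Lt3 π (φ a) (φ b) ↔ Lt3 π (φ c) (φ d)) := by
  have h1 : Lt2 (π * Fin.revPerm) b.rev a.rev := (lt2_rev_iff π a b).mpr hab
  have h2 : Lt2 (π * Fin.revPerm) d.rev c.rev := (lt2_rev_iff π c d).mpr hcd
  have := sconst (simple_rev hπ) (revIso π φ) h1 h2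
  rw [revIso_apply, revIso_apply, revIso_apply, revIso_apply] at this
  rw [Fin.rev_rev, Fin.rev_rev, Fin.rev_rev, Fin.rev_rev] at this
  rwa [lt2_rev_iff, lt2_rev_iff] at this


/-- image of a non-edge is comparable one way or the other -/
lemma im_cmp {π : Equiv.Perm (Fin n)} (φ : invGraph π ≃g invGraph π)
    {i j : Fin n} (h : Lt2 π i j) :
    Lt2 π (φ i) (φ j) ∨ Lt2 π (φ j) (φ i) := by
  refine lt2_or π (fun hh => lt2_ne h (φ.injective hh)) ?_
  exact fun hh => lt2_not_adj h (φ.map_adj_iff.mp hh)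

lemma im_adj {π : Equiv.Perm (Fin n)} (φ : invGraph π ≃g invGraph π)
    {i j : Fin n} (h : Lt3 π i j) :
    Lt3 π (φ i) (φ j) ∨ Lt3 π (φ j) (φ i) := by
  have hadj : (invGraph π).Adj (φ i) (φ j) := φ.map_adj_iff.mpr
    ((adj_iff π i j).mpr (Or.inl h))
  rw [adj_iff] at hadj
  exact hadj

lemma lt2_asymm {π : Equiv.Perm (Fin n)} {i j : Fin n}
    (h1 : Lt2 π i j) (h2 : Lt2 π j i) : False := absurd h2.1 (asymm h1.1)

lemma lt3_asymm {π : Equiv.Perm (Fin n)} {i j : Fin n}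
    (h1 : Lt3 π i j) (h2 : Lt3 π j i) : False := absurd h2.1 (asymm h1.1)

def Ps (π : Equiv.Perm (Fin n)) (φ : invGraph π ≃g invGraph π) : Prop :=
  ∀ i j, Lt2 π i j → Lt2 π (φ i) (φ j)
def Ns (π : Equiv.Perm (Fin n)) (φ : invGraph π ≃g invGraph π) : Prop :=
  ∀ i j, Lt2 π i j → Lt2 π (φ j) (φ i)
def Pt (π : Equiv.Perm (Fin n)) (φ : invGraph π ≃g invGraph π) : Prop :=
  ∀ i j, Lt3 π i j → Lt3 π (φ i) (φ j)
def Nt (π : Equiv.Perm (Fin n)) (φ : invGraph π ≃g invGraph π) : Prop :=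
  ∀ i j, Lt3 π i j → Lt3 π (φ j) (φ i)

lemma s_dichot {π : Equiv.Perm (Fin n)} (hπ : IsSimplePerm π)
    (φ : invGraph π ≃g invGraph π) : Ps π φ ∨ Ns π φ := by
  by_cases hex : ∃ i j, Lt2 π i j
  · obtain ⟨i0, j0, h0⟩ := hex
    rcases im_cmp φ h0 with hc | hc
    · exact Or.inl (fun i j hij => (sconst hπ φ hij h0).mpr hc)
    · refine Or.inr (fun i j hij => ?_)
      rcases im_cmp φ hij with h | h
      · exact absurd ((sconst hπ φ hij h0).mp h) (fun hh => lt2_asymm hh hc)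
      · exact h
  · exact Or.inl (fun i j hij => absurd ⟨i, j, hij⟩ hex)

lemma t_dichot {π : Equiv.Perm (Fin n)} (hπ : IsSimplePerm π)
    (φ : invGraph π ≃g invGraph π) : Pt π φ ∨ Nt π φ := by
  by_cases hex : ∃ i j, Lt3 π i j
  · obtain ⟨i0, j0, h0⟩ := hex
    rcases im_adj φ h0 with hc | hc
    · exact Or.inl (fun i j hij => (tconst hπ φ hij h0).mpr hc)
    · refine Or.inr (fun i j hij => ?_)
      rcases im_adj φ hij with h | h
      · exact absurd ((tconst hπ φ hij h0).mp h) (fun hh => lt3_asymm hh hc)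
      · exact h
  · exact Or.inl (fun i j hij => absurd ⟨i, j, hij⟩ hex)


theorem final {π : Equiv.Perm (Fin n)} (hπ : IsSimplePerm π) :
    (∃ f : (invGraph π ≃g invGraph π) →* Multiplicative (ZMod 2 × ZMod 2),
        Function.Injective f) ∧
      Nat.card (invGraph π ≃g invGraph π) ≤ 4 ∧
      ∀ φ : invGraph π ≃g invGraph π, φ * φ = 1 := by
  classical
  set s : (invGraph π ≃g invGraph π) → ZMod 2 := fun φ => if Ps π φ then 0 else 1 with hs
  set t : (invGraph π ≃g invGraph π) → ZMod 2 := fun φ => if Pt π φ then 0 else 1 with ht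
  have hmul_apply : ∀ (φ ψ : invGraph π ≃g invGraph π) (x : Fin n), (φ * ψ) x = φ (ψ x) :=
    fun _ _ _ => rfl
  have hone_apply : ∀ x : Fin n, (1 : invGraph π ≃g invGraph π) x = x := fun _ => rfl
  have hsmul : ∀ φ ψ, s (φ * ψ) = s φ + s ψ := by
    intro φ ψ
    by_cases hex : ∃ i j, Lt2 π i j
    · obtain ⟨i0, j0, h0⟩ := hex
      have hPN : ∀ χ : invGraph π ≃g invGraph π, Ns π χ → ¬ Ps π χ :=
        fun χ hN hP => lt2_asymm (hP i0 j0 h0) (hN i0 j0 h0)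
      rcases s_dichot hπ φ with hφ | hφ <;> rcases s_dichot hπ ψ with hψ | hψ
      · have h1 : Ps π (φ * ψ) := fun i j h => by
          rw [hmul_apply, hmul_apply]; exact hφ _ _ (hψ _ _ h)
        simp [hs, if_pos hφ, if_pos hψ, if_pos h1]
      · have h1 : Ns π (φ * ψ) := fun i j h => by
          rw [hmul_apply, hmul_apply]; exact hφ _ _ (hψ _ _ h)
        simp [hs, if_pos hφ, if_neg (hPN _ hψ), if_neg (hPN _ h1)]
      · have h1 : Ns π (φ * ψ) := fun i j h => by
          rw [hmul_apply, hmul_apply]; exact hφ _ _ (hψ _ _ h)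
        simp [hs, if_neg (hPN _ hφ), if_pos hψ, if_neg (hPN _ h1)]
      · have h1 : Ps π (φ * ψ) := fun i j h => by
          rw [hmul_apply, hmul_apply]; exact hφ _ _ (hψ _ _ h)
        have : (1 : ZMod 2) + 1 = 0 := by decide
        simp [hs, if_neg (hPN _ hφ), if_neg (hPN _ hψ), if_pos h1, this]
    · have hall : ∀ χ : invGraph π ≃g invGraph π, Ps π χ :=
        fun χ i j hij => absurd ⟨i, j, hij⟩ hex
      simp [hs, if_pos (hall φ), if_pos (hall ψ), if_pos (hall (φ * ψ))]
  have htmul : ∀ φ ψ, t (φ * ψ) = t φ + t ψ := by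
    intro φ ψ
    by_cases hex : ∃ i j, Lt3 π i j
    · obtain ⟨i0, j0, h0⟩ := hex
      have hPN : ∀ χ : invGraph π ≃g invGraph π, Nt π χ → ¬ Pt π χ :=
        fun χ hN hP => lt3_asymm (hP i0 j0 h0) (hN i0 j0 h0)
      rcases t_dichot hπ φ with hφ | hφ <;> rcases t_dichot hπ ψ with hψ | hψ
      · have h1 : Pt π (φ * ψ) := fun i j h => by
          rw [hmul_apply, hmul_apply]; exact hφ _ _ (hψ _ _ h)
        simp [ht, if_pos hφ, if_pos hψ, if_pos h1]
      · have h1 : Nt π (φ * ψ) := fun i j h => by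
          rw [hmul_apply, hmul_apply]; exact hφ _ _ (hψ _ _ h)
        simp [ht, if_pos hφ, if_neg (hPN _ hψ), if_neg (hPN _ h1)]
      · have h1 : Nt π (φ * ψ) := fun i j h => by
          rw [hmul_apply, hmul_apply]; exact hφ _ _ (hψ _ _ h)
        simp [ht, if_neg (hPN _ hφ), if_pos hψ, if_neg (hPN _ h1)]
      · have h1 : Pt π (φ * ψ) := fun i j h => by
          rw [hmul_apply, hmul_apply]; exact hφ _ _ (hψ _ _ h)
        have : (1 : ZMod 2) + 1 = 0 := by decide
        simp [ht, if_neg (hPN _ hφ), if_neg (hPN _ hψ), if_pos h1, this]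
    · have hall : ∀ χ : invGraph π ≃g invGraph π, Pt π χ :=
        fun χ i j hij => absurd ⟨i, j, hij⟩ hex
      simp [ht, if_pos (hall φ), if_pos (hall ψ), if_pos (hall (φ * ψ))]
  have hsone : s 1 = 0 := by
    have : Ps π 1 := fun i j h => by rw [hone_apply, hone_apply]; exact h
    simp [hs, if_pos this]
  have htone : t 1 = 0 := by
    have : Pt π 1 := fun i j h => by rw [hone_apply, hone_apply]; exact h
    simp [ht, if_pos this]
  set f : (invGraph π ≃g invGraph π) →* Multiplicative (ZMod 2 × ZMod 2) :=
    { toFun := fun φ => Multiplicative.ofAdd (s φ, t φ)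
      map_one' := by
        show Multiplicative.ofAdd (s 1, t 1) = 1
        rw [hsone, htone]; rfl
      map_mul' := fun φ ψ => by
        show Multiplicative.ofAdd (s (φ * ψ), t (φ * ψ)) = _
        rw [hsmul, htmul]; rfl } with hf
  have hker : ∀ φ : invGraph π ≃g invGraph π, f φ = 1 → φ = 1 := by
    intro φ hφ
    have hpair : s φ = 0 ∧ t φ = 0 := by
      have := congrArg Multiplicative.toAdd hφ
      simp only [hf, MonoidHom.coe_mk, OneHom.coe_mk, toAdd_ofAdd, toAdd_one] at this
      exact ⟨congrArg Prod.fst this, congrArg Prod.snd this⟩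
    have hPs : Ps π φ := by
      by_contra h
      rw [hs] at hpair
      simp only [if_neg h] at hpair
      exact one_ne_zero hpair.1
    have hPt : Pt π φ := by
      by_contra h
      rw [ht] at hpair
      simp only [if_neg h] at hpair
      exact one_ne_zero hpair.2
    have hmono : StrictMono (φ : Fin n → Fin n) := by
      intro i j hij
      rcases val_lt_or π (ne_of_lt hij) with hv | hv
      · exact (hPs i j ⟨hij, hv⟩).1
      · exact (hPt i j ⟨hij, hv⟩).1
    have hrange : Set.range (φ : Fin n → Fin n) = Set.range (id : Fin n → Fin n) := by
      rw [Set.range_id]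
      exact Set.range_eq_univ.mpr φ.surjective
    haveI : WellFoundedLT (Fin n) := Finite.to_wellFoundedLT
    have hfun : (φ : Fin n → Fin n) = id := (hmono.range_inj strictMono_id).mp hrange
    exact RelIso.ext (fun x => congrFun hfun x)
  have hinj : Function.Injective f := (injective_iff_map_eq_one f).mpr hker
  refine ⟨⟨f, hinj⟩, ?_, ?_⟩
  · have hcard : Nat.card (Multiplicative (ZMod 2 × ZMod 2)) = 4 := by
      simp [Nat.card_eq_fintype_card]
    calc Nat.card (invGraph π ≃g invGraph π) ≤
        Nat.card (Multiplicative (ZMod 2 × ZMod 2)) :=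
          Nat.card_le_card_of_injective f hinj
      _ = 4 := hcard
  · intro φ
    apply hker
    rw [map_mul]
    have : ∀ x : Multiplicative (ZMod 2 × ZMod 2), x * x = 1 := by decide
    exact this (f φ)


end AutKlein

/-- The automorphism group of the inversion graph of a simple permutation embeds in
`ℤ/2 × ℤ/2`; in particular it has at most `4` elements, all of them involutions. -/
theorem aut_invGraph_subgroup_klein {n : ℕ} (π : Equiv.Perm (Fin n))
    (hπ : IsSimplePerm π) :
    (∃ f : (invGraph π ≃g invGraph π) →* Multiplicative (ZMod 2 × ZMod 2),
        Function.Injective f) ∧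
      Nat.card (invGraph π ≃g invGraph π) ≤ 4 ∧
      ∀ φ : invGraph π ≃g invGraph π, φ * φ = 1 :=
  AutKlein.final hπ
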